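/- Let R be a finitely generated associative unital K-algebra without zero divisors and I a nonzero right ideal of R. If the cogrowth satisfies Γ_{R/I}(n) ≺ Γ_R(n) (i.e., Γ_{R/I} ≼ Γ_R but they are not equivalent), then I is an essential right ideal: I intersects every nonzero right ideal of R nontrivially. -/
import Mathlib


/-- `R^{(n)}`: the span of products of at most `n` elements of the generating set `X`. -/
def monomialSpan (K : Type*) {R : Type*} [Field K] [Ring R] [Algebra K R]
    (X : Set R) (n : ℕ) : Submodule K R :=
  Submodule.span K {r | ∃ l : List R, l.length ≤ n ∧ (∀ x ∈ l, x ∈ X) ∧ l.prod = r}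

/-- The growth function of the algebra `R`: `Γ_R(n) = dim R^{(n)}`. -/
noncomputable def algGrowth (K : Type*) {R : Type*} [Field K] [Ring R] [Algebra K R]
    (X : Set R) (n : ℕ) : ℕ :=
  Module.finrank K ↥(monomialSpan K X n)

/-- The growth function of a right ideal (or subspace) `I`: `Γ_I(n) = dim (I ∩ R^{(n)})`. -/
noncomputable def idealGrowth (K : Type*) {R : Type*} [Field K] [Ring R] [Algebra K R]
    (X : Set R) (I : Submodule K R) (n : ℕ) : ℕ :=
  Module.finrank K ↥(I ⊓ monomialSpan K X n)

/-- The cogrowth function of `I`: `Γ_{R/I}(n) = dim R^{(n)} - dim (I ∩ R^{(n)})`. -/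
noncomputable def idealCogrowth (K : Type*) {R : Type*} [Field K] [Ring R] [Algebra K R]
    (X : Set R) (I : Submodule K R) (n : ℕ) : ℕ :=
  algGrowth K X n - idealGrowth K X I n

/-- A `K`-subspace of `R` which is a right ideal. -/
def IsRightIdeal (K : Type*) {R : Type*} [Field K] [Ring R] [Algebra K R]
    (I : Submodule K R) : Prop :=
  ∀ a ∈ I, ∀ r : R, a * r ∈ I

/-- The preorder on growth functions: `f ≼ g` iff `f(n) ≤ g(Cn)` for some `C`. -/
def GrowthLE (f g : ℕ → ℕ) : Prop := ∃ C : ℕ, 0 < C ∧ ∀ n, f n ≤ g (C * n)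

section Aux

variable {K R : Type*} [Field K] [Ring R] [Algebra K R]

lemma monomialSpan_mono (X : Set R) {m n : ℕ} (h : m ≤ n) :
    monomialSpan K X m ≤ monomialSpan K X n := by
  apply Submodule.span_mono
  rintro r ⟨l, hl, hm, hp⟩
  exact ⟨l, hl.trans h, hm, hp⟩

lemma monomialSpan_finiteDimensional (X : Finset R) (n : ℕ) :
    FiniteDimensional K (monomialSpan K (X : Set R) n) := by
  apply FiniteDimensional.span_of_finite
  have hfin : ({l : List {x // x ∈ X} | l.length ≤ n}).Finite := List.finite_length_le _ n
  have : {r : R | ∃ l : List R, l.length ≤ n ∧ (∀ x ∈ l, x ∈ (X : Set R)) ∧ l.prod = r} ⊆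
      (fun l : List {x // x ∈ X} => (l.map Subtype.val).prod) '' {l | l.length ≤ n} := by
    rintro r ⟨l, hl, hm, hp⟩
    refine ⟨l.pmap (fun x hx => (⟨x, hx⟩ : {x // x ∈ X})) hm, ?_, ?_⟩
    · simpa using hl
    · simp only [List.map_pmap]
      rw [List.pmap_eq_map]
      simp [hp]
  exact ((hfin.image _).subset this)

lemma mul_mem_monomialSpan (X : Set R) {m n : ℕ} {a b : R}
    (ha : a ∈ monomialSpan K X m) (hb : b ∈ monomialSpan K X n) :
    a * b ∈ monomialSpan K X (m + n) := by
  have h : monomialSpan K X m * monomialSpan K X n ≤ monomialSpan K X (m + n) := by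
    rw [monomialSpan, monomialSpan, Submodule.span_mul_span]
    apply Submodule.span_mono
    rintro r ⟨x, ⟨lx, hlx, hmx, hpx⟩, y, ⟨ly, hly, hmy, hpy⟩, rfl⟩
    exact ⟨lx ++ ly, by simpa using Nat.add_le_add hlx hly,
      fun z hz => by rcases List.mem_append.1 hz with h | h; exacts [hmx z h, hmy z h],
      by simp [hpx, hpy]⟩
  exact h (Submodule.mul_mem_mul ha hb)

lemma exists_mem_monomialSpan (X : Set R) (hgen : Algebra.adjoin K X = ⊤) (b : R) :
    ∃ c : ℕ, b ∈ monomialSpan K X c := by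
  have hmem : b ∈ Submodule.span K (Submonoid.closure X : Set R) := by
    rw [← Algebra.adjoin_eq_span, hgen]; trivial
  have hle : Submodule.span K (Submonoid.closure X : Set R) ≤
      ⨆ n : ℕ, monomialSpan K X n := by
    rw [Submodule.span_le]
    intro x hx
    obtain ⟨l, hm, hp⟩ := Submonoid.exists_list_of_mem_closure hx
    exact Submodule.mem_iSup_of_mem l.length
      (Submodule.subset_span ⟨l, le_refl _, hm, hp⟩)
  have hdir : Directed (· ≤ ·) (fun n : ℕ => monomialSpan K X n) :=
    (fun m n => ⟨m ⊔ n, monomialSpan_mono X le_sup_left, monomialSpan_mono X le_sup_right⟩)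
  exact (Submodule.mem_iSup_of_directed _ hdir).1 (hle hmem)

end Aux

/-- In an algebra without zero divisors, a nonzero right ideal whose cogrowth is
strictly smaller than the growth of `R` is essential. -/
theorem essential_of_cogrowth_lt {K R : Type*} [Field K] [Ring R] [Algebra K R]
    [NoZeroDivisors R] (X : Finset R) (hgen : Algebra.adjoin K (X : Set R) = ⊤)
    (I : Submodule K R) (hI : IsRightIdeal K I) (hne : I ≠ ⊥)
    (hlt : GrowthLE (idealCogrowth K (X : Set R) I) (algGrowth K (X : Set R))
      ∧ ¬ GrowthLE (algGrowth K (X : Set R)) (idealCogrowth K (X : Set R) I)) :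
    ∀ J : Submodule K R, IsRightIdeal K J → J ≠ ⊥ → I ⊓ J ≠ ⊥ := by
  intro J hJ hJne hIJ
  obtain ⟨b, hbJ, hb0⟩ := Submodule.exists_mem_ne_zero_of_ne_bot hJne
  obtain ⟨c, hbc⟩ := exists_mem_monomialSpan (K := K) (X : Set R) hgen b
  -- I cannot be all of R
  have hItop : I ≠ ⊤ := by
    intro h
    rw [h, top_inf_eq] at hIJ
    exact hJne hIJ
  haveI : ∀ n, FiniteDimensional K (monomialSpan K (X : Set R) n) :=
    fun n => monomialSpan_finiteDimensional X n
  -- left multiplication by b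
  set f : R →ₗ[K] R := LinearMap.mulLeft K b with hf
  have hinj : Function.Injective f := fun x y h => by
    have : b * x = b * y := h
    exact mul_left_cancel₀ hb0 this
  apply hlt.2
  refine ⟨c + 1, Nat.succ_pos _, fun n => ?_⟩
  rcases Nat.eq_zero_or_pos n with rfl | hn
  · -- n = 0 : show idealGrowth at 0 is 0
    have h10 : idealGrowth K (X : Set R) I 0 = 0 := by
      have hbot : I ⊓ monomialSpan K (X : Set R) 0 = ⊥ := by
        rw [eq_bot_iff]
        rintro x ⟨hxI, hxS⟩
        have hset : {r : R | ∃ l : List R, l.length ≤ 0 ∧ (∀ y ∈ l, y ∈ (X : Set R))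
            ∧ l.prod = r} = {1} := by
          ext r
          constructor
          · rintro ⟨l, hl, -, hp⟩
            rw [Nat.le_zero, List.length_eq_zero_iff] at hl
            subst hl; simpa using hp.symm
          · rintro rfl
            exact ⟨[], by simp, by simp, by simp⟩
        rw [monomialSpan, hset, SetLike.mem_coe, Submodule.mem_span_singleton] at hxS
        obtain ⟨a, rfl⟩ := hxS
        rcases eq_or_ne a 0 with rfl | ha
        · simp
        · exfalso
          apply hItop
          have h1 : (1 : R) ∈ I := by
            have := I.smul_mem a⁻¹ hxI
            rwa [smul_smul, inv_mul_cancel₀ ha, one_smul] at this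
          rw [eq_top_iff]
          intro r _
          simpa using hI 1 h1 r
      rw [idealGrowth, hbot]
      simp
    simp [idealCogrowth, h10]
  · -- n ≥ 1
    set m := (c + 1) * n with hm
    set P := Submodule.map f (monomialSpan K (X : Set R) n) with hP
    haveI : FiniteDimensional K P := Module.Finite.map _ _
    have hPle : P ≤ monomialSpan K (X : Set R) m := by
      rintro x ⟨r, hr, rfl⟩
      have : b * r ∈ monomialSpan K (X : Set R) (c + n) :=
        mul_mem_monomialSpan (X : Set R) hbc hr
      exact monomialSpan_mono (X : Set R)
        (by nlinarith : c + n ≤ (c + 1) * n) this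
    have hPJ : P ≤ J := by
      rintro x ⟨r, hr, rfl⟩
      exact hJ b hbJ r
    have hPrank : Module.finrank K P = algGrowth K (X : Set R) n :=
      (Submodule.equivMapOfInjective f hinj _).finrank_eq.symm
    set Q := I ⊓ monomialSpan K (X : Set R) m with hQ
    have hPQ : P ⊓ Q = ⊥ := by
      rw [eq_bot_iff, ← hIJ]
      rintro x ⟨hxP, hxQ⟩
      exact ⟨hxQ.1, hPJ hxP⟩
    have hsum : Module.finrank K P + Module.finrank K Q ≤ algGrowth K (X : Set R) m := by
      have h1 := Submodule.finrank_sup_add_finrank_inf_eq P Q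
      rw [hPQ] at h1
      simp only [finrank_bot, add_zero] at h1
      rw [← h1]
      exact Submodule.finrank_mono (sup_le hPle inf_le_right)
    rw [hPrank] at hsum
    exact Nat.le_sub_of_add_le hsum
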